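/- Let A₁,…,A_m ∈ R^{N×N} be symmetric positive semidefinite, b₁,…,b_m ∈ R, and f(x) = Σᵢ (⟨Aᵢx, x⟩ − bᵢ)². Every gradient trajectory of f is bounded: if x : [0,∞) → R^N solves x'(t) = −∇f(x(t)) with x(0) = x₀, then sup_{t≥0} ‖x(t)‖ < ∞. -/

import Mathlib

open RealInnerProductSpace

variable {E : Type*} [NormedAddCommGroup E] [InnerProductSpace ℝ E] [FiniteDimensional ℝ E]

-- L1: PSD kernel lemma
omit [FiniteDimensional ℝ E] in
theorem psd_apply_eq_zero (A : E →ₗ[ℝ] E) (hsym : ∀ x y, ⟪A x, y⟫ = ⟪x, A y⟫)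
    (hpsd : ∀ x, 0 ≤ ⟪A x, x⟫) {v : E} (hv : ⟪A v, v⟫ = 0) : A v = 0 := by
  have key : ∀ w : E, ⟪A v, w⟫ = 0 := by
    intro w
    set s := ⟪A v, w⟫ with hs
    set q := ⟪A w, w⟫ with hq
    have hq0 : 0 ≤ q := hpsd w
    have expand : ∀ t : ℝ, 0 ≤ 2 * t * s + t ^ 2 * q := by
      intro t
      have h := hpsd (v + t • w)
      have : ⟪A (v + t • w), v + t • w⟫ = ⟪A v, v⟫ + t * ⟪A v, w⟫ + t * ⟪A w, v⟫ + t ^ 2 * ⟪A w, w⟫ := by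
        simp [map_add, map_smul, inner_add_add_self, inner_add_left, inner_add_right,
          real_inner_smul_left, real_inner_smul_right]
        ring
      have hwv : ⟪A w, v⟫ = s := by rw [hs, hsym w v, real_inner_comm]
      rw [this, hv, hwv] at h
      linarith
    by_contra hne
    have h1 := expand (-s / (q + 1))
    have hq1 : 0 < q + 1 := by linarith
    have hs2 : 0 < s ^ 2 := by positivity
    have hne1 : q + 1 ≠ 0 := ne_of_gt hq1
    field_simp at h1
    nlinarith [mul_pos hs2 (by linarith : (0:ℝ) < q + 2)]
  have := key (A v)
  exact inner_self_eq_zero.mp this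

variable {E : Type*} [NormedAddCommGroup E] [InnerProductSpace ℝ E] [FiniteDimensional ℝ E]

theorem quad_lower_bound (V : Submodule ℝ E) (Q : E → ℝ) (hQc : Continuous Q)
    (hQh : ∀ (r : ℝ) (v : E), Q (r • v) = r ^ 2 * Q v)
    (hQpos : ∀ v ∈ V, v ≠ 0 → 0 < Q v) :
    ∃ c : ℝ, 0 < c ∧ ∀ v ∈ V, c * ‖v‖ ^ 2 ≤ Q v := by
  have hQ0 : Q 0 = 0 := by
    have := hQh 0 0
    simpa using this
  by_cases hV : ∀ v ∈ V, v = (0 : E)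
  · refine ⟨1, one_pos, fun v hv => ?_⟩
    rw [hV v hv]; simp [hQ0]
  · push_neg at hV
    obtain ⟨v₁, hv₁V, hv₁⟩ := hV
    haveI : Nontrivial V := ⟨⟨v₁, hv₁V⟩, 0, by simpa using hv₁⟩
    have hcomp : IsCompact (Metric.sphere (0 : V) 1) := isCompact_sphere 0 1
    have hne : (Metric.sphere (0 : V) 1).Nonempty := NormedSpace.sphere_nonempty.mpr zero_le_one
    have hcont : Continuous fun v : V => Q (v : E) := hQc.comp continuous_subtype_val
    obtain ⟨u, huS, hmin⟩ := hcomp.exists_isMinOn hne hcont.continuousOn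
    have hu1 : ‖(u : E)‖ = 1 := mem_sphere_zero_iff_norm.mp huS
    have hune : (u : E) ≠ 0 := by intro h; rw [h] at hu1; simp at hu1
    set c := Q (u : E) with hc
    have hcpos : 0 < c := hQpos _ u.2 hune
    refine ⟨c, hcpos, fun v hv => ?_⟩
    rcases eq_or_ne v 0 with rfl | hvne
    · simp [hQ0]
    · have hn : (0:ℝ) < ‖v‖ := norm_pos_iff.mpr hvne
      set w : V := ⟨‖v‖⁻¹ • v, V.smul_mem _ hv⟩ with hw
      have hwS : w ∈ Metric.sphere (0 : V) 1 := by
        rw [mem_sphere_zero_iff_norm]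
        show ‖‖v‖⁻¹ • v‖ = 1
        rw [norm_smul]; simp [hn.ne']
      have h1 := hmin hwS
      have h2 : Q (‖v‖⁻¹ • v) = ‖v‖⁻¹ ^ 2 * Q v := hQh _ _
      have h3 : c ≤ ‖v‖⁻¹ ^ 2 * Q v := by
        calc c ≤ Q (w : E) := h1
        _ = ‖v‖⁻¹ ^ 2 * Q v := h2
      calc c * ‖v‖ ^ 2 ≤ (‖v‖⁻¹ ^ 2 * Q v) * ‖v‖ ^ 2 := by
            apply mul_le_mul_of_nonneg_right h3 (by positivity)
        _ = Q v := by field_simp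

variable {E : Type*} [NormedAddCommGroup E] [InnerProductSpace ℝ E] [FiniteDimensional ℝ E]

theorem hasGradientAt_quad {m : ℕ} (A : Fin m → E →ₗ[ℝ] E)
    (hsym : ∀ i (x y : E), ⟪A i x, y⟫ = ⟪x, A i y⟫)
    (b : Fin m → ℝ) (f : E → ℝ) (hf : ∀ x, f x = ∑ i, (⟪A i x, x⟫ - b i) ^ 2) (y : E) :
    HasGradientAt f (∑ i, (4 * (⟪A i y, y⟫ - b i)) • A i y) y := by
  rw [hasGradientAt_iff_hasFDerivAt]
  have hfun : f = fun x => ∑ i, (⟪A i x, x⟫ - b i) * (⟪A i x, x⟫ - b i) := by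
    funext z; rw [hf]; exact Finset.sum_congr rfl fun i _ => by ring
  rw [hfun]
  have hAi : ∀ i, HasFDerivAt (fun x : E => A i x) (LinearMap.toContinuousLinearMap (A i)) y :=
    fun i => (LinearMap.toContinuousLinearMap (A i)).hasFDerivAt
  have hginner : ∀ i, HasFDerivAt (fun x : E => ⟪A i x, x⟫)
      ((fderivInnerCLM ℝ (A i y, y)).comp
        ((LinearMap.toContinuousLinearMap (A i)).prod (ContinuousLinearMap.id ℝ E))) y :=
    fun i => (hAi i).inner ℝ (hasFDerivAt_id y)
  have hgi : ∀ i, HasFDerivAt (fun x : E => ⟪A i x, x⟫ - b i)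
      ((fderivInnerCLM ℝ (A i y, y)).comp
        ((LinearMap.toContinuousLinearMap (A i)).prod (ContinuousLinearMap.id ℝ E))) y :=
    fun i => (hginner i).sub_const (b i)
  set D : Fin m → (E →L[ℝ] ℝ) := fun i => (fderivInnerCLM ℝ (A i y, y)).comp
        ((LinearMap.toContinuousLinearMap (A i)).prod (ContinuousLinearMap.id ℝ E)) with hD
  have hsq : ∀ i, HasFDerivAt (fun x : E => (⟪A i x, x⟫ - b i) * (⟪A i x, x⟫ - b i))
      ((⟪A i y, y⟫ - b i) • D i + (⟪A i y, y⟫ - b i) • D i) y :=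
    fun i => (hgi i).mul (hgi i)
  have hsum := HasFDerivAt.fun_sum (u := Finset.univ) (fun i _ => hsq i)
  refine hsum.congr_fderiv ?_
  ext h
  simp only [ContinuousLinearMap.sum_apply, ContinuousLinearMap.add_apply,
    ContinuousLinearMap.coe_smul', Pi.smul_apply, hD, ContinuousLinearMap.coe_comp',
    Function.comp_apply, ContinuousLinearMap.prod_apply, ContinuousLinearMap.coe_id', id_eq,
    LinearMap.coe_toContinuousLinearMap', fderivInnerCLM_apply, smul_eq_mul,
    InnerProductSpace.toDual_apply_apply, sum_inner, real_inner_smul_left]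
  refine Finset.sum_congr rfl fun i _ => ?_
  have h1 : ⟪A i h, y⟫ = ⟪A i y, h⟫ := by rw [hsym i h y, real_inner_comm]
  rw [h1]; ring

theorem const_on_Ici_of_deriv_zero (g : ℝ → ℝ)
    (h : ∀ s ∈ Set.Ici (0:ℝ), HasDerivAt g 0 s) {t : ℝ} (ht : 0 ≤ t) : g t = g 0 := by
  have hc : ∀ s ∈ Set.Ici (0:ℝ), ContinuousWithinAt g (Set.Ici 0) s :=
    fun s hs => (h s hs).continuousAt.continuousWithinAt
  have hd : ∀ s ∈ interior (Set.Ici (0:ℝ)), DifferentiableAt ℝ g s := by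
    intro s hs; rw [interior_Ici] at hs; exact (h s (Set.mem_Ici.mpr (le_of_lt hs))).differentiableAt
  have hz : ∀ s ∈ interior (Set.Ici (0:ℝ)), deriv g s = 0 := by
    intro s hs; rw [interior_Ici] at hs; exact (h s (Set.mem_Ici.mpr (le_of_lt hs))).deriv
  have h1 : AntitoneOn g (Set.Ici 0) :=
    antitoneOn_of_deriv_nonpos (convex_Ici 0) (fun s hs => hc s hs)
      (fun s hs => (hd s hs).differentiableWithinAt) (fun s hs => le_of_eq (hz s hs))
  have h2 : MonotoneOn g (Set.Ici 0) :=
    monotoneOn_of_deriv_nonneg (convex_Ici 0) (fun s hs => hc s hs)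
      (fun s hs => (hd s hs).differentiableWithinAt) (fun s hs => ge_of_eq (hz s hs))
  exact le_antisymm (h1 Set.self_mem_Ici ht ht) (h2 Set.self_mem_Ici ht ht)

theorem stmt14 {N m : ℕ}
    (A : Fin m → EuclideanSpace ℝ (Fin N) →ₗ[ℝ] EuclideanSpace ℝ (Fin N))
    (hsym : ∀ i x y, ⟪A i x, y⟫ = ⟪x, A i y⟫)
    (hpsd : ∀ i x, 0 ≤ ⟪A i x, x⟫)
    (b : Fin m → ℝ)
    (f : EuclideanSpace ℝ (Fin N) → ℝ)
    (hf : ∀ x, f x = ∑ i, (⟪A i x, x⟫ - b i) ^ 2)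
    (x₀ : EuclideanSpace ℝ (Fin N))
    (x : ℝ → EuclideanSpace ℝ (Fin N)) (hx0 : x 0 = x₀)
    (hx : ∀ t ∈ Set.Ici (0 : ℝ), HasDerivAt x (-gradient f (x t)) t) :
    ∃ C : ℝ, ∀ t : ℝ, 0 ≤ t → ‖x t‖ ≤ C := by
  classical
  set gr : EuclideanSpace ℝ (Fin N) → EuclideanSpace ℝ (Fin N) :=
    fun y => ∑ i, (4 * (⟪A i y, y⟫ - b i)) • A i y with hgrdef
  have hgr : ∀ y, HasGradientAt f (gr y) y := fun y => hasGradientAt_quad A hsym b f hf y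
  have hgrad : ∀ y, gradient f y = gr y := fun y => (hgr y).gradient
  set V : Submodule ℝ (EuclideanSpace ℝ (Fin N)) := ⨆ i, LinearMap.range (A i) with hVdef
  have hrange : ∀ i z, A i z ∈ V :=
    fun i z => (le_iSup (fun j => LinearMap.range (A j)) i) (LinearMap.mem_range_self _ z)
  have hgrV : ∀ y, gr y ∈ V := fun y => Submodule.sum_mem _ fun i _ => V.smul_mem _ (hrange i y)
  have hx' : ∀ t ∈ Set.Ici (0:ℝ), HasDerivAt x (-(gr (x t))) t := by
    intro t ht; have h := hx t ht; rwa [hgrad] at h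
  -- f is decreasing along the flow
  have hfle : ∀ t, 0 ≤ t → f (x t) ≤ f x₀ := by
    have hder : ∀ t ∈ Set.Ici (0:ℝ), HasDerivAt (fun t => f (x t)) (-‖gr (x t)‖ ^ 2) t := by
      intro t ht
      have h1 := (hgr (x t)).hasFDerivAt.comp_hasDerivAt t (hx' t ht)
      refine h1.congr_deriv ?_
      rw [InnerProductSpace.toDual_apply_apply, inner_neg_right, real_inner_self_eq_norm_sq]
    have hmono : AntitoneOn (fun t => f (x t)) (Set.Ici 0) := by
      apply antitoneOn_of_deriv_nonpos (convex_Ici 0)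
      · exact fun t ht => (hder t ht).continuousAt.continuousWithinAt
      · intro t ht; rw [interior_Ici] at ht
        exact (hder t (Set.mem_Ici.mpr (le_of_lt ht))).differentiableAt.differentiableWithinAt
      · intro t ht; rw [interior_Ici] at ht
        rw [(hder t (Set.mem_Ici.mpr (le_of_lt ht))).deriv]
        simp [sq_nonneg]
    intro t ht
    have h := hmono Set.self_mem_Ici ht ht
    simpa [hx0] using h
  set F := f x₀ with hFdef
  have hQi : ∀ t, 0 ≤ t → ∀ i, ⟪A i (x t), x t⟫ ≤ b i + Real.sqrt F := by
    intro t ht i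
    have h1 : (⟪A i (x t), x t⟫ - b i) ^ 2 ≤ F := by
      have h2 := hfle t ht
      rw [hf (x t)] at h2
      exact le_trans (Finset.single_le_sum (f := fun j => (⟪A j (x t), x t⟫ - b j) ^ 2)
        (fun j _ => sq_nonneg _) (Finset.mem_univ i)) h2
    have h3 : ⟪A i (x t), x t⟫ - b i ≤ Real.sqrt F := by
      calc ⟪A i (x t), x t⟫ - b i ≤ |⟪A i (x t), x t⟫ - b i| := le_abs_self _
        _ = Real.sqrt ((⟪A i (x t), x t⟫ - b i) ^ 2) := (Real.sqrt_sq_eq_abs _).symm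
        _ ≤ Real.sqrt F := Real.sqrt_le_sqrt h1
    linarith
  set M := ∑ i, (b i + Real.sqrt F) with hMdef
  -- the trajectory stays in x₀ + V
  have hdiffV : ∀ t, 0 ≤ t → x t - x₀ ∈ V := by
    intro t ht
    rw [← V.orthogonal_orthogonal]
    intro w hw
    have hψ : ∀ s ∈ Set.Ici (0:ℝ), HasDerivAt (fun s => ⟪w, x s⟫) 0 s := by
      intro s hs
      have h1 := (innerSL ℝ w).hasFDerivAt.comp_hasDerivAt s (hx' s hs)
      refine h1.congr_deriv ?_
      have h2 : ⟪w, gr (x s)⟫ = 0 := real_inner_comm w (gr (x s)) ▸ hw _ (hgrV (x s))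
      simp [inner_neg_right, h2]
    have hconst : ⟪w, x t⟫ = ⟪w, x 0⟫ := const_on_Ici_of_deriv_zero _ hψ ht
    have : ⟪w, x t - x₀⟫ = 0 := by
      rw [inner_sub_right, ← hx0, hconst, sub_self]
    exact this
  -- quadratic form and its lower bound on V
  set Q : EuclideanSpace ℝ (Fin N) → ℝ := fun y => ∑ i, ⟪A i y, y⟫ with hQdef
  have hQcont : Continuous Q := by
    apply continuous_finset_sum
    intro i _
    exact Continuous.inner (A i).continuous_of_finiteDimensional continuous_id
  have hQhom : ∀ (r : ℝ) (v : EuclideanSpace ℝ (Fin N)), Q (r • v) = r ^ 2 * Q v := by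
    intro r v
    rw [hQdef, Finset.mul_sum]
    refine Finset.sum_congr rfl fun i _ => ?_
    rw [map_smul, real_inner_smul_left, real_inner_smul_right]
    ring
  have hQpos : ∀ v ∈ V, v ≠ 0 → 0 < Q v := by
    intro v hv hvne
    have hQnn : 0 ≤ Q v := Finset.sum_nonneg fun i _ => hpsd i v
    rcases lt_or_eq_of_le hQnn with h | h
    · exact h
    exfalso
    have hzero : ∀ i, ⟪A i v, v⟫ = 0 := by
      intro i
      have := (Finset.sum_eq_zero_iff_of_nonneg (fun j _ => hpsd j v)).mp h.symm i (Finset.mem_univ i)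
      exact this
    have hAiv : ∀ i, A i v = 0 := fun i => psd_apply_eq_zero (A i) (hsym i) (hpsd i) (hzero i)
    have hvperp : v ∈ Vᗮ := by
      intro u hu
      refine Submodule.iSup_induction (motive := fun u => ⟪u, v⟫ = 0) _ hu ?_ ?_ ?_
      · rintro i u ⟨z, rfl⟩
        rw [hsym i z v, hAiv i, inner_zero_right]
      · exact inner_zero_left v
      · intro a c ha hc; rw [inner_add_left, ha, hc, add_zero]
    have : ⟪v, v⟫ = 0 := hvperp v hv
    exact hvne (inner_self_eq_zero.mp this)
  obtain ⟨c, hcpos, hc⟩ := quad_lower_bound V Q hQcont hQhom hQpos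
  -- decomposition of x₀
  set v₀ : EuclideanSpace ℝ (Fin N) := (V.orthogonalProjectionOnto x₀ : EuclideanSpace ℝ (Fin N)) with hv₀
  set w₀ : EuclideanSpace ℝ (Fin N) := x₀ - v₀ with hw₀
  have hw₀perp : w₀ ∈ Vᗮ := by exact V.sub_starProjection_mem_orthogonal x₀
  have hAw : ∀ i, A i w₀ = 0 := by
    intro i
    have h1 : ⟪A i w₀, A i w₀⟫ = 0 := by
      rw [hsym i w₀ (A i w₀), real_inner_comm]
      exact hw₀perp _ (hrange i (A i w₀))
    exact inner_self_eq_zero.mp h1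
  refine ⟨Real.sqrt (M / c) + ‖w₀‖, fun t ht => ?_⟩
  obtain ⟨u, huV, hxt⟩ : ∃ u, u ∈ V ∧ x t = u + w₀ :=
    ⟨v₀ + (x t - x₀), V.add_mem (V.orthogonalProjectionOnto x₀).2 (hdiffV t ht), by
      rw [hw₀]; abel⟩
  have hQeq : Q u = ∑ i, ⟪A i (x t), x t⟫ := by
    refine Finset.sum_congr rfl fun i _ => ?_
    rw [hxt, map_add, hAw i, add_zero, inner_add_right]
    have : ⟪A i u, w₀⟫ = 0 := by rw [hsym i u w₀, hAw i, inner_zero_right]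
    rw [this, add_zero]
  have hQM : Q u ≤ M := by
    rw [hQeq, hMdef]
    exact Finset.sum_le_sum fun i _ => hQi t ht i
  have hub : ‖u‖ ≤ Real.sqrt (M / c) := by
    have h1 : c * ‖u‖ ^ 2 ≤ M := le_trans (hc u huV) hQM
    have h2 : ‖u‖ ^ 2 ≤ M / c := (le_div_iff₀' hcpos).mpr h1
    calc ‖u‖ = Real.sqrt (‖u‖ ^ 2) := (Real.sqrt_sq (norm_nonneg u)).symm
      _ ≤ Real.sqrt (M / c) := Real.sqrt_le_sqrt h2
  calc ‖x t‖ = ‖u + w₀‖ := by rw [hxt]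
    _ ≤ ‖u‖ + ‖w₀‖ := norm_add_le _ _
    _ ≤ Real.sqrt (M / c) + ‖w₀‖ := by linarith
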